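/- Let n', n'' ≥ 0 be integers with n' + n'' ≥ 2, and suppose C ⊆ ℤ2^{2n'} × ℤ4^{n''} is an additive 1-perfect code with respect to the Hamming metric, i.e., with respect to the graph which is the box product of n' complete graphs on (ZMod 2) × (ZMod 2) (one on each consecutive pair of ℤ2-coordinates) and n'' complete graphs on ZMod 4 (one on each ℤ4-coordinate). Then n'' = 0. -/

import Mathlib

open SimpleGraph

/-- The box (Cartesian) product of an indexed family of simple graphs. -/
def boxPi {ι : Type*} {V : ι → Type*} (G : ∀ i, SimpleGraph (V i)) :
    SimpleGraph (∀ i, V i) where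
  Adj x y := ∃ i, (G i).Adj (x i) (y i) ∧ ∀ j, j ≠ i → x j = y j
  symm := by
    constructor
    rintro x y ⟨i, h, he⟩
    exact ⟨i, h.symm, fun j hj => (he j hj).symm⟩
  loopless := by
    constructor
    rintro x ⟨i, h, -⟩
    exact (G i).loopless.irrefl _ h

/-- The Shrikhande graph on `(ZMod 4) × (ZMod 4)`. -/
def Shri : SimpleGraph (ZMod 4 × ZMod 4) where
  Adj a b := a - b ∈
    ({(0, 1), (1, 0), (1, 1), (0, 3), (3, 0), (3, 3)} : Finset (ZMod 4 × ZMod 4))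
  symm := by
    have h : ∀ a b : ZMod 4 × ZMod 4,
        a - b ∈ ({(0, 1), (1, 0), (1, 1), (0, 3), (3, 0), (3, 3)} :
          Finset (ZMod 4 × ZMod 4)) →
        b - a ∈ ({(0, 1), (1, 0), (1, 1), (0, 3), (3, 0), (3, 3)} :
          Finset (ZMod 4 × ZMod 4)) := by decide
    exact ⟨fun a b hab => h a b hab⟩
  loopless := by
    constructor
    intro a h
    rw [sub_self] at h
    revert h
    decide

/-- `C` is a 1-perfect code in `G`: every vertex is at graph distance at most 1
(i.e., equal or adjacent) from exactly one element of `C`. -/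
def IsPerfectCode {V : Type*} (G : SimpleGraph V) (C : Set V) : Prop :=
  ∀ v : V, ∃! c : V, c ∈ C ∧ (v = c ∨ G.Adj v c)

/-- The vertex set `ℤ₂^{2n'} × ℤ₄^{n''}`, the consecutive pairs of
`ZMod 2`-coordinates being grouped together. -/
abbrev HamVtx (n' n'' : ℕ) : Type :=
  (Fin n' → ZMod 2 × ZMod 2) × (Fin n'' → ZMod 4)

/-- The Hamming graph on `ℤ₂^{2n'} × ℤ₄^{n''}`: the box product of `n'` complete
graphs on `(ZMod 2) × (ZMod 2)` (one on each consecutive pair of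
`ZMod 2`-coordinates) and `n''` complete graphs on `ZMod 4`. -/
def HamGraphZ (n' n'' : ℕ) : SimpleGraph (HamVtx n' n'') :=
  (boxPi fun _ : Fin n' => (⊤ : SimpleGraph (ZMod 2 × ZMod 2))) □
    (boxPi fun _ : Fin n'' => (⊤ : SimpleGraph (ZMod 4)))

section AuxLemmas

variable {n' n'' : ℕ}

lemma hamGraph_adj_iff (x y : HamVtx n' n'') :
    (HamGraphZ n' n'').Adj x y ↔
      ((∃ m : Fin n', x.1 m ≠ y.1 m ∧ ∀ k, k ≠ m → x.1 k = y.1 k) ∧ x.2 = y.2) ∨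
      ((∃ m : Fin n'', x.2 m ≠ y.2 m ∧ ∀ k, k ≠ m → x.2 k = y.2 k) ∧ x.1 = y.1) := by
  rw [HamGraphZ, SimpleGraph.boxProd_adj]
  constructor
  · rintro (⟨⟨m, hm, he⟩, h2⟩ | ⟨⟨m, hm, he⟩, h2⟩)
    · exact Or.inl ⟨⟨m, hm, he⟩, h2⟩
    · exact Or.inr ⟨⟨m, hm, he⟩, h2⟩
  · rintro (⟨⟨m, hm, he⟩, h2⟩ | ⟨⟨m, hm, he⟩, h2⟩)
    · exact Or.inl ⟨⟨m, hm, he⟩, h2⟩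
    · exact Or.inr ⟨⟨m, hm, he⟩, h2⟩

lemma near_ofR (u x : HamVtx n' n'') (m : Fin n'')
    (h1 : u.1 = x.1) (h2 : ∀ k, k ≠ m → u.2 k = x.2 k) :
    u = x ∨ (HamGraphZ n' n'').Adj u x := by
  by_cases hm : u.2 m = x.2 m
  · left
    refine Prod.ext h1 (funext fun k => ?_)
    by_cases hk : k = m
    · rw [hk]; exact hm
    · exact h2 k hk
  · right
    rw [hamGraph_adj_iff]
    exact Or.inr ⟨⟨m, hm, h2⟩, h1⟩

lemma near_ofL (u x : HamVtx n' n'') (m : Fin n')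
    (h1 : u.2 = x.2) (h2 : ∀ k, k ≠ m → u.1 k = x.1 k) :
    u = x ∨ (HamGraphZ n' n'').Adj u x := by
  by_cases hm : u.1 m = x.1 m
  · left
    refine Prod.ext (funext fun k => ?_) h1
    by_cases hk : k = m
    · rw [hk]; exact hm
    · exact h2 k hk
  · right
    rw [hamGraph_adj_iff]
    exact Or.inl ⟨⟨m, hm, h2⟩, h1⟩

lemma zero_of_close (C : AddSubgroup (HamVtx n' n''))
    (hC : IsPerfectCode (HamGraphZ n' n'') (C : Set (HamVtx n' n'')))
    (d : HamVtx n' n'') (hd : d ∈ C) (u : HamVtx n' n'')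
    (h0 : u = 0 ∨ (HamGraphZ n' n'').Adj u 0)
    (hu : u = d ∨ (HamGraphZ n' n'').Adj u d) : d = 0 := by
  obtain ⟨e, -, he⟩ := hC u
  exact (he d ⟨hd, hu⟩).trans (he 0 ⟨C.zero_mem, h0⟩).symm

lemma aux_main (C : AddSubgroup (HamVtx n' n''))
    (hC : IsPerfectCode (HamGraphZ n' n'') (C : Set (HamVtx n' n'')))
    (i0 : Fin n'') (v : HamVtx n' n'')
    (hv1 : v.2 i0 = 1)
    (hz2 : ∀ k, k ≠ i0 → v.2 k + v.2 k = 0)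
    (hU : ∀ u : HamVtx n' n'', u.1 = v.1 → u.2 i0 = 0 →
      (∀ k, k ≠ i0 → u.2 k = v.2 k) → (u = 0 ∨ (HamGraphZ n' n'').Adj u 0))
    (hVne : ¬ (v.1 = 0 ∧ ∀ k, k ≠ i0 → v.2 k = 0)) : False := by
  obtain ⟨c, ⟨hcC, hnear⟩, -⟩ := hC v
  by_cases hb : c.2 i0 = 1
  · -- the covering codeword agrees with v at i0; double it
    have hm : ∃ m : Fin n'', ∀ k, k ≠ m → k ≠ i0 → c.2 k = v.2 k := by
      rcases hnear with h | h
      · exact ⟨i0, fun k _ _ => (congrFun (congrArg Prod.snd h) k).symm⟩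
      · rw [hamGraph_adj_iff] at h
        rcases h with ⟨-, h2⟩ | ⟨⟨m, -, hm⟩, -⟩
        · exact ⟨i0, fun k _ _ => (congrFun h2 k).symm⟩
        · exact ⟨m, fun k hk _ => (hm k hk).symm⟩
    obtain ⟨m, hm⟩ := hm
    have hdC : c + c ∈ C := C.add_mem hcC hcC
    have hd1 : (c + c).1 = 0 := by
      funext k
      have h22 : ∀ t : ZMod 2 × ZMod 2, t + t = 0 := by decide
      exact h22 (c.1 k)
    set u : HamVtx n' n'' :=
      (0, fun k => if k = i0 then 0 else c.2 k + c.2 k) with hu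
    have h0 : u = 0 ∨ (HamGraphZ n' n'').Adj u 0 := by
      apply near_ofR u 0 m rfl
      intro k hk
      show (if k = i0 then 0 else c.2 k + c.2 k) = 0
      by_cases hki : k = i0
      · rw [if_pos hki]
      · rw [if_neg hki, hm k hk hki]
        exact hz2 k hki
    have hnd : u = c + c ∨ (HamGraphZ n' n'').Adj u (c + c) := by
      apply near_ofR u (c + c) i0 hd1.symm
      intro k hk
      show (if k = i0 then 0 else c.2 k + c.2 k) = (c + c).2 k
      rw [if_neg hk]
      rfl
    have hd0 : c + c = 0 := zero_of_close C hC (c + c) hdC u h0 hnd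
    have : c.2 i0 + c.2 i0 = 0 := congrFun (congrArg Prod.snd hd0) i0
    rw [hb] at this
    exact absurd this (by decide)
  · -- the covering codeword differs from v exactly at i0
    have hA : v.1 = c.1 ∧ ∀ k, k ≠ i0 → v.2 k = c.2 k := by
      rcases hnear with h | h
      · exact absurd (by rw [← congrFun (congrArg Prod.snd h) i0]; exact hv1) hb
      · rw [hamGraph_adj_iff] at h
        rcases h with ⟨-, h2⟩ | ⟨⟨m, hm1, hm2⟩, h1⟩
        · exact absurd (by rw [← congrFun h2 i0]; exact hv1) hb
        · by_cases hmi : m = i0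
          · subst hmi
            exact ⟨h1, hm2⟩
          · exact absurd (by rw [← hm2 i0 (fun hh => hmi hh.symm)]; exact hv1) hb
    set u : HamVtx n' n'' := (v.1, fun k => if k = i0 then 0 else c.2 k) with hu
    have h0 : u = 0 ∨ (HamGraphZ n' n'').Adj u 0 := by
      apply hU u rfl (if_pos rfl)
      intro k hk
      show (if k = i0 then 0 else c.2 k) = v.2 k
      rw [if_neg hk, ← hA.2 k hk]
    have hnc : u = c ∨ (HamGraphZ n' n'').Adj u c := by
      apply near_ofR u c i0 hA.1
      intro k hk
      show (if k = i0 then 0 else c.2 k) = c.2 k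
      rw [if_neg hk]
    have hc0 : c = 0 := zero_of_close C hC c hcC u h0 hnc
    apply hVne
    refine ⟨by rw [hA.1, hc0]; rfl, fun k hk => ?_⟩
    rw [hA.2 k hk, hc0]
    rfl

end AuxLemmas
theorem additive_hamming_perfect_code_no_z4_part (n' n'' : ℕ) (h : 2 ≤ n' + n'')
    (C : AddSubgroup (HamVtx n' n''))
    (hC : IsPerfectCode (HamGraphZ n' n'') (C : Set (HamVtx n' n''))) :
    n'' = 0 := by
  by_contra hne
  have hn'' : 0 < n'' := Nat.pos_of_ne_zero hne
  set i0 : Fin n'' := ⟨0, hn''⟩ with hi0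
  rcases Nat.eq_zero_or_pos n' with hn' | hn'
  · -- n' = 0 so n'' ≥ 2
    have h2'' : 2 ≤ n'' := by omega
    set i1 : Fin n'' := ⟨1, h2''⟩ with hi1
    have hne01 : i1 ≠ i0 := by
      simp [hi0, hi1, Fin.ext_iff]
    set v : HamVtx n' n'' :=
      (0, fun k => if k = i0 then 1 else if k = i1 then 2 else 0) with hv
    apply aux_main C hC i0 v
    · show (if i0 = i0 then (1 : ZMod 4) else if i0 = i1 then 2 else 0) = 1
      rw [if_pos rfl]
    · intro k hk
      show (if k = i0 then (1:ZMod 4) else if k = i1 then 2 else 0) +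
        (if k = i0 then 1 else if k = i1 then 2 else 0) = 0
      rw [if_neg hk]
      by_cases hk1 : k = i1
      · rw [if_pos hk1]; decide
      · rw [if_neg hk1]; decide
    · intro u h1 h2 h3
      apply near_ofR u 0 i1 (by rw [h1]; rfl)
      intro k hk
      show u.2 k = 0
      by_cases hki : k = i0
      · rw [hki]; exact h2
      · rw [h3 k hki]
        show (if k = i0 then (1:ZMod 4) else if k = i1 then 2 else 0) = 0
        rw [if_neg hki, if_neg hk]
    · rintro ⟨-, h'⟩
      have := h' i1 hne01
      rw [show v.2 i1 = (if i1 = i0 then (1:ZMod 4) else if i1 = i1 then 2 else 0) from rfl,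
        if_neg hne01, if_pos rfl] at this
      exact absurd this (by decide)
  · -- n' ≥ 1
    set j0 : Fin n' := ⟨0, hn'⟩ with hj0
    set v : HamVtx n' n'' :=
      (fun k => if k = j0 then ((1, 0) : ZMod 2 × ZMod 2) else 0,
        fun k => if k = i0 then 1 else 0) with hv
    apply aux_main C hC i0 v
    · show (if i0 = i0 then (1 : ZMod 4) else 0) = 1
      rw [if_pos rfl]
    · intro k hk
      show (if k = i0 then (1:ZMod 4) else 0) + (if k = i0 then 1 else 0) = 0
      rw [if_neg hk]; decide
    · intro u h1 h2 h3
      have hu2 : u.2 = 0 := by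
        funext k
        by_cases hk : k = i0
        · rw [hk]; exact h2
        · rw [h3 k hk]
          show (if k = i0 then (1:ZMod 4) else 0) = 0
          rw [if_neg hk]
      apply near_ofL u 0 j0 hu2
      intro k hk
      rw [h1]
      show (if k = j0 then ((1, 0) : ZMod 2 × ZMod 2) else 0) = 0
      rw [if_neg hk]
    · rintro ⟨h', -⟩
      have := congrFun h' j0
      have hc : ((1, 0) : ZMod 2 × ZMod 2) = 0 := by
        rw [show v.1 j0 = (if j0 = j0 then ((1,0) : ZMod 2 × ZMod 2) else 0) from rfl,
          if_pos rfl] at this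
        exact this
      exact absurd hc (by decide)
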